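/- The vertices of the N-dimensional hypercube graph (vertex set 𝔽₂^N, edges between vectors differing in one coordinate, edge labeled by the coordinate in which they differ, vertices 2-colored by parity of weight) admit a labeling of the 2^(N-1) even-weight (white) vertices by 1_w,...,m_w and the 2^(N-1) odd-weight (black) vertices by 1_b,...,m_b (m = 2^(N-1)) such that: i_w is joined to i_b by the edge of color 1, and for each k with 2 ≤ k ≤ N, i_w is joined by the edge of color k to (i + 2^(k-2))_b if i mod 2^(k-1) ∈ [1, 2^(k-2)], and to (i - 2^(k-2))_b otherwise. Moreover, any white vertex may be chosen as 1_w. -/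

import Mathlib

/-- Two vertices of the hypercube 𝔽₂^N are joined by an edge of color c
(1-indexed color c corresponds to coordinate c-1) iff they differ exactly in
that coordinate. -/
def cubeAdj (N : ℕ) (c : Fin N) (x y : Fin N → ZMod 2) : Prop :=
  x c ≠ y c ∧ ∀ j : Fin N, j ≠ c → x j = y j

/-- Hamming weight of a vertex of 𝔽₂^N. -/
def cubeWeight (N : ℕ) (x : Fin N → ZMod 2) : ℕ :=
  (Finset.univ.filter fun j => x j ≠ 0).card


open Finset

def gbit (n t : ℕ) : ZMod 2 := if n.testBit t then 1 else 0

def gfun (N n : ℕ) : ℕ → ZMod 2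
  | 0 => ∑ t ∈ Finset.range (N-1), gbit n t
  | t+1 => gbit n t

lemma zmod2_even_iff (m : ℕ) : Even m ↔ (m : ZMod 2) = 0 := by
  rw [ZMod.natCast_eq_zero_iff, Nat.even_iff]
  omega

lemma zmod2_odd_iff (m : ℕ) : Odd m ↔ (m : ZMod 2) = 1 := by
  rw [← Nat.not_even_iff_odd, zmod2_even_iff]
  have : ∀ a : ZMod 2, ¬ a = 0 ↔ a = 1 := by decide
  exact this _

lemma zmod2_ne_add_one (a : ZMod 2) : a ≠ a + 1 := by
  revert a; decide

lemma testBit_ge {n j : ℕ} (h : n.testBit j = true) : 2 ^ j ≤ n := by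
  by_contra h'
  rw [Nat.testBit_eq_false_of_lt (by omega)] at h
  exact Bool.false_ne_true h

lemma testBit_add_two_pow (n j t : ℕ) (h : n.testBit j = false) :
    (n + 2 ^ j).testBit t = (n.testBit t ^^ decide (t = j)) := by
  rw [Nat.testBit_eq_decide_div_mod_eq] at h
  have hq : n / 2 ^ j % 2 = 0 := by
    simp only [decide_eq_false_iff_not] at h; omega
  rcases lt_trichotomy t j with h1 | rfl | h1
  · have he : 2 ^ t * (2 * 2 ^ (j - t - 1)) = 2 ^ j := by
      rw [← pow_succ']
      rw [← pow_add]
      congr 1; omega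
    have hd : (n + 2 ^ j) / 2 ^ t = n / 2 ^ t + 2 * 2 ^ (j - t - 1) := by
      rw [← he, Nat.add_mul_div_left _ _ (Nat.two_pow_pos t)]
    simp only [Nat.testBit_eq_decide_div_mod_eq, hd]
    have : t ≠ j := by omega
    simp [this, Nat.add_mul_mod_self_left]
  · have hd : (n + 2 ^ t) / 2 ^ t = n / 2 ^ t + 1 :=
      Nat.add_div_right _ (Nat.two_pow_pos t)
    simp only [Nat.testBit_eq_decide_div_mod_eq, hd]
    simp [Nat.add_mod, hq]
  · have hpow : 2 ^ j * (2 * 2 ^ (t - j - 1)) = 2 ^ t := by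
      rw [← pow_succ', ← pow_add]
      congr 1; omega
    have h2 : ∀ m : ℕ, m / 2 ^ t = m / 2 ^ j / 2 / 2 ^ (t - j - 1) := by
      intro m
      rw [Nat.div_div_eq_div_mul, Nat.div_div_eq_div_mul, hpow]
    have hd : (n + 2 ^ j) / 2 ^ j = n / 2 ^ j + 1 :=
      Nat.add_div_right _ (Nat.two_pow_pos j)
    have hh : (n + 2 ^ j) / 2 ^ j / 2 = n / 2 ^ j / 2 := by
      rw [hd]; omega
    simp only [Nat.testBit_eq_decide_div_mod_eq, h2, hh]
    have : t ≠ j := by omega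
    simp [this]

lemma testBit_sub_two_pow (n j t : ℕ) (h : n.testBit j = true) :
    (n - 2 ^ j).testBit t = (n.testBit t ^^ decide (t = j)) := by
  have hge := testBit_ge h
  have hn : n = (n - 2 ^ j) + 2 ^ j := by omega
  have hb : (n - 2 ^ j).testBit j = false := by
    rw [Nat.testBit_eq_decide_div_mod_eq] at h ⊢
    have hd : n / 2 ^ j = (n - 2 ^ j) / 2 ^ j + 1 := by
      conv_lhs => rw [hn]
      exact Nat.add_div_right _ (Nat.two_pow_pos j)
    simp only [decide_eq_true_eq] at h
    simp only [decide_eq_false_iff_not]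
    omega
  have := testBit_add_two_pow (n - 2 ^ j) j t hb
  rw [← hn] at this
  rw [this, Bool.xor_assoc]
  simp

lemma cond_iff (P i : ℕ) (hP : 0 < P) (hi : 1 ≤ i) :
    (1 ≤ i % (P * 2) ∧ i % (P * 2) ≤ P) ↔ (i - 1) / P % 2 = 0 := by
  obtain ⟨q, r, hrlt, hn⟩ : ∃ q r, r < P * 2 ∧ i - 1 = P * 2 * q + r :=
    ⟨(i - 1) / (P * 2), (i - 1) % (P * 2), Nat.mod_lt _ (by omega),
      (Nat.div_add_mod (i - 1) (P * 2)).symm⟩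
  have h1 : (i - 1) / P = 2 * q + r / P := by
    rw [hn, show P * 2 * q = P * (2 * q) by ring, Nat.mul_add_div hP]
  have h2 : r / P < 2 := Nat.div_lt_of_lt_mul (by omega)
  have hi' : i = P * 2 * q + (r + 1) := by omega
  have hstep : ∀ s, i % (P * 2) = s → ((1 ≤ s ∧ s ≤ P) ↔ (i - 1) / P % 2 = 0) → 
      ((1 ≤ i % (P * 2) ∧ i % (P * 2) ≤ P) ↔ (i - 1) / P % 2 = 0) := by
    intro s hs hiff; rw [hs]; exact hiff
  by_cases hrp : r < P
  · have h0 : r / P = 0 := Nat.div_eq_of_lt hrp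
    have hcase : r + 1 < P * 2 := by omega
    have hmod : i % (P * 2) = r + 1 := by
      rw [hi', Nat.mul_add_mod, Nat.mod_eq_of_lt hcase]
    rw [hmod, h1, h0]
    omega
  · have h0 : 1 ≤ r / P := (Nat.one_le_div_iff hP).mpr (by omega)
    by_cases hcase : r + 1 < P * 2
    · have hmod : i % (P * 2) = r + 1 := by
        rw [hi', Nat.mul_add_mod, Nat.mod_eq_of_lt hcase]
      rw [hmod, h1]
      omega
    · have hieq : i = P * 2 * (q + 1) := by rw [hi', show r + 1 = P * 2 by omega]; ring
      have hmod : i % (P * 2) = 0 := by rw [hieq]; exact Nat.mul_mod_right _ _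
      rw [hmod, h1]
      omega

lemma gfun_sum (N n : ℕ) (hN : 1 ≤ N) : ∑ j : Fin N, gfun N n (j : ℕ) = 0 := by
  rw [Fin.sum_univ_eq_sum_range (fun t => gfun N n t) N]
  obtain ⟨M, rfl⟩ : ∃ M, N = M + 1 := ⟨N - 1, by omega⟩
  rw [Finset.sum_range_succ']
  have h1 : ∀ x, gfun (M + 1) n (x + 1) = gbit n x := fun x => rfl
  have h2 : gfun (M + 1) n 0 = ∑ t ∈ Finset.range M, gbit n t := by
    simp [gfun]
  simp only [h1, h2]
  have : ∀ a : ZMod 2, a + a = 0 := by decide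
  exact this _

lemma gfun_inj (N : ℕ) (n n' : ℕ) (h1 : n < 2 ^ (N - 1)) (h2 : n' < 2 ^ (N - 1))
    (h : ∀ j : Fin N, gfun N n (j : ℕ) = gfun N n' (j : ℕ)) : n = n' := by
  apply Nat.eq_of_testBit_eq
  intro t
  by_cases ht : t < N - 1
  · have := h ⟨t + 1, by omega⟩
    simp only [gfun] at this
    unfold gbit at this
    cases hb : n.testBit t <;> cases hb' : n'.testBit t <;> simp_all
  · have hle : 2 ^ (N - 1) ≤ 2 ^ t := Nat.pow_le_pow_right (by norm_num) (by omega)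
    rw [Nat.testBit_eq_false_of_lt (by omega), Nat.testBit_eq_false_of_lt (by omega)]

lemma gfun_flip (N k n n' : ℕ) (hk : 2 ≤ k) (hkN : k ≤ N)
    (hbits : ∀ t, n'.testBit t = (n.testBit t ^^ decide (t = k - 2))) :
    gfun N n' 0 = gfun N n 0 + 1 ∧
    gfun N n' (k - 1) = gfun N n (k - 1) + 1 ∧
    ∀ t, t ≠ 0 → t ≠ k - 1 → gfun N n' t = gfun N n t := by
  have hflipb : ∀ t, t = k - 2 → gbit n' t = gbit n t + 1 := by
    intro t ht
    have := hbits t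
    rw [ht] at this ⊢
    simp only [decide_eq_true_eq, decide_true] at this
    unfold gbit
    cases hb : n.testBit (k - 2) <;> simp_all <;> decide
  have hsameb : ∀ t, t ≠ k - 2 → gbit n' t = gbit n t := by
    intro t ht
    have := hbits t
    simp only [ht, decide_false, Bool.xor_false] at this
    unfold gbit
    rw [this]
  refine ⟨?_, ?_, ?_⟩
  · have h2 : ∀ M, gfun M n' 0 = ∑ t ∈ Finset.range (M - 1), gbit n' t := by
      intro M; simp [gfun]
    have h2' : ∀ M, gfun M n 0 = ∑ t ∈ Finset.range (M - 1), gbit n t := by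
      intro M; simp [gfun]
    rw [h2, h2']
    have step : ∀ t ∈ Finset.range (N - 1),
        gbit n' t = gbit n t + (if t = k - 2 then 1 else 0) := by
      intro t _
      by_cases ht : t = k - 2
      · rw [hflipb t ht, if_pos ht]
      · rw [hsameb t ht, if_neg ht, add_zero]
    rw [Finset.sum_congr rfl step, Finset.sum_add_distrib]
    congr 1
    rw [Finset.sum_ite_eq' (Finset.range (N - 1)) (k - 2) (fun _ => (1 : ZMod 2))]
    rw [if_pos]
    simp only [Finset.mem_range]
    omega
  · rw [show k - 1 = (k - 2) + 1 by omega]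
    exact hflipb (k - 2) rfl
  · intro t ht0 htk
    obtain ⟨s, rfl⟩ : ∃ s, t = s + 1 := ⟨t - 1, by omega⟩
    exact hsameb s (by omega)

lemma cubeWeight_cast (N : ℕ) (x : Fin N → ZMod 2) :
    ((cubeWeight N x : ZMod 2)) = ∑ j, x j := by
  unfold cubeWeight
  rw [← Finset.sum_filter_ne_zero Finset.univ]
  rw [Finset.card_eq_sum_ones, Nat.cast_sum]
  refine Finset.sum_congr rfl ?_
  intro j hj
  simp only [Finset.mem_filter] at hj
  have h1 : ∀ a : ZMod 2, a ≠ 0 → (1 : ZMod 2) = a := by decide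
  simpa using h1 _ hj.2

lemma adj_of_flip (N k : ℕ) (v0 : Fin N → ZMod 2) (n n' : ℕ) (hk : 2 ≤ k) (hkN : k ≤ N)
    (hbits : ∀ t, n'.testBit t = (n.testBit t ^^ decide (t = k - 2))) :
    cubeAdj N ⟨k - 1, by omega⟩ (fun j => v0 j + gfun N n (j : ℕ))
      (fun j => v0 j + gfun N n' (j : ℕ) + (if (j : ℕ) = 0 then 1 else 0)) := by
  obtain ⟨hA, hB, hC⟩ := gfun_flip N k n n' hk hkN hbits
  unfold cubeAdj
  constructor
  · simp only
    rw [hB, if_neg (show ¬ (k - 1 = 0) by omega), add_zero]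
    intro hEq
    rw [← add_assoc] at hEq
    exact zmod2_ne_add_one _ hEq
  · intro j hj
    have hjv : (j : ℕ) ≠ k - 1 := fun h => hj (Fin.ext h)
    simp only
    by_cases hz : (j : ℕ) = 0
    · rw [hz, if_pos rfl, hA]
      have h2 : ∀ a b : ZMod 2, a + b = a + (b + 1) + 1 := by decide
      exact h2 _ _
    · rw [if_neg hz, hC (j : ℕ) hz hjv, add_zero]

/-- Proposition: labeling of the N-cube.  The white (even-weight) vertices and
black (odd-weight) vertices can be labeled by 1,…,2^(N-1) such that i_w is
joined to i_b by color 1, and for 2 ≤ k ≤ N, i_w is joined by color k to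
(i+2^(k-2))_b if i mod 2^(k-1) ∈ [1,2^(k-2)] and to (i-2^(k-2))_b otherwise;
moreover any white vertex may be chosen as 1_w. -/
theorem stmt6 (N : ℕ) (hN : 1 ≤ N) (v0 : Fin N → ZMod 2)
    (hv0 : Even (cubeWeight N v0)) :
    ∃ w b : ℕ → (Fin N → ZMod 2),
      Set.InjOn w (Set.Icc 1 (2 ^ (N - 1))) ∧
      Set.InjOn b (Set.Icc 1 (2 ^ (N - 1))) ∧
      (∀ i ∈ Set.Icc 1 (2 ^ (N - 1)), Even (cubeWeight N (w i))) ∧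
      (∀ i ∈ Set.Icc 1 (2 ^ (N - 1)), Odd (cubeWeight N (b i))) ∧
      w 1 = v0 ∧
      (∀ i ∈ Set.Icc 1 (2 ^ (N - 1)),
        cubeAdj N ⟨0, by omega⟩ (w i) (b i)) ∧
      (∀ k, 2 ≤ k → (hkN : k ≤ N) → ∀ i ∈ Set.Icc 1 (2 ^ (N - 1)),
        if 1 ≤ i % 2 ^ (k - 1) ∧ i % 2 ^ (k - 1) ≤ 2 ^ (k - 2) then
          cubeAdj N ⟨k - 1, by omega⟩ (w i) (b (i + 2 ^ (k - 2)))
        else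
          cubeAdj N ⟨k - 1, by omega⟩ (w i) (b (i - 2 ^ (k - 2)))) := by
  have hv0sum : ∑ j, v0 j = 0 := by
    rw [← cubeWeight_cast, ← zmod2_even_iff]; exact hv0
  refine ⟨fun i j => v0 j + gfun N (i - 1) (j : ℕ),
      fun i j => v0 j + gfun N (i - 1) (j : ℕ) + (if (j : ℕ) = 0 then 1 else 0),
      ?_, ?_, ?_, ?_, ?_, ?_, ?_⟩
  · intro i hi i' hi' h
    simp only [Set.mem_Icc] at hi hi'
    have hg : ∀ j : Fin N, gfun N (i - 1) (j : ℕ) = gfun N (i' - 1) (j : ℕ) := by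
      intro j; exact add_left_cancel (congrFun h j)
    have := gfun_inj N (i - 1) (i' - 1) (by omega) (by omega) hg
    omega
  · intro i hi i' hi' h
    simp only [Set.mem_Icc] at hi hi'
    have hg : ∀ j : Fin N, gfun N (i - 1) (j : ℕ) = gfun N (i' - 1) (j : ℕ) := by
      intro j; exact add_left_cancel (add_right_cancel (congrFun h j))
    have := gfun_inj N (i - 1) (i' - 1) (by omega) (by omega) hg
    omega
  · intro i _
    rw [zmod2_even_iff, cubeWeight_cast]
    simp only
    rw [Finset.sum_add_distrib, gfun_sum N _ hN, add_zero, hv0sum]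
  · intro i _
    rw [zmod2_odd_iff, cubeWeight_cast]
    simp only
    rw [Finset.sum_add_distrib, Finset.sum_add_distrib, gfun_sum N _ hN, add_zero, hv0sum,
      zero_add]
    rw [Fin.sum_univ_eq_sum_range (fun t => if t = 0 then (1 : ZMod 2) else 0) N]
    rw [Finset.sum_ite_eq' (Finset.range N) 0 (fun _ => (1 : ZMod 2))]
    rw [if_pos (by simp only [Finset.mem_range]; omega)]
  · funext j
    have h0 : ∀ t, gfun N 0 t = 0 := by
      intro t
      cases t with
      | zero => simp [gfun, gbit, Nat.zero_testBit]
      | succ s => simp [gfun, gbit, Nat.zero_testBit]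
    simp [h0]
  · intro i _
    unfold cubeAdj
    constructor
    · simp only
      rw [if_pos (by trivial)]
      exact zmod2_ne_add_one _
    · intro j hj
      have hjv : (j : ℕ) ≠ 0 := fun h => hj (Fin.ext h)
      simp only
      rw [if_neg hjv, add_zero]
  · intro k hk2 hkN i hi
    simp only [Set.mem_Icc] at hi
    have hP : 0 < 2 ^ (k - 2) := Nat.two_pow_pos _
    have hpow : 2 ^ (k - 1) = 2 ^ (k - 2) * 2 := by
      rw [← pow_succ]; congr 1; omega
    have hcond := cond_iff (2 ^ (k - 2)) i hP (by omega)
    rw [← hpow] at hcond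
    have hbit_iff : (1 ≤ i % 2 ^ (k - 1) ∧ i % 2 ^ (k - 1) ≤ 2 ^ (k - 2)) ↔
        (i - 1).testBit (k - 2) = false := by
      rw [hcond, Nat.testBit_eq_decide_div_mod_eq]
      simp only [decide_eq_false_iff_not]
      omega
    split_ifs with hCnd
    · have hbit : (i - 1).testBit (k - 2) = false := hbit_iff.mp hCnd
      have hbits := fun t => testBit_add_two_pow (i - 1) (k - 2) t hbit
      have hidx : i + 2 ^ (k - 2) - 1 = (i - 1) + 2 ^ (k - 2) := by omega
      simp only [hidx]
      exact adj_of_flip N k v0 (i - 1) (i - 1 + 2 ^ (k - 2)) hk2 hkN hbits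
    · have hbit : (i - 1).testBit (k - 2) = true := by
        cases hb : (i - 1).testBit (k - 2) with
        | false => exact absurd (hbit_iff.mpr hb) hCnd
        | true => rfl
      have hge := testBit_ge hbit
      have hbits := fun t => testBit_sub_two_pow (i - 1) (k - 2) t hbit
      have hidx : i - 2 ^ (k - 2) - 1 = (i - 1) - 2 ^ (k - 2) := by omega
      simp only [hidx]
      exact adj_of_flip N k v0 (i - 1) (i - 1 - 2 ^ (k - 2)) hk2 hkN hbits
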